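/- arXiv:0901.4010 — 2 statements merged into one kernel-verified Lean document; each statement's English description precedes it below -/
import Mathlib

section
/- Let γ be a ray in a complete Riemannian manifold M, and let σ be an asymptotic ray of γ. Then the Busemann function F_γ of γ satisfies F_γ(σ(t)) = t + F_γ(σ(0)) for all t ≥ 0. -/
open Set Filter Metric Real MeasureTheory

/-- A unit-speed ray in a metric space: distance-realizing on `[0, ∞)`. -/
def IsRay {M : Type*} [MetricSpace M] (γ : ℝ → M) : Prop :=
  ∀ s ∈ Set.Ici (0:ℝ), ∀ t ∈ Set.Ici (0:ℝ), dist (γ s) (γ t) = |s - t|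

/-- A unit-speed minimal geodesic segment of length `L`. -/
def IsMinSeg {M : Type*} [MetricSpace M] (c : ℝ → M) (L : ℝ) : Prop :=
  ∀ a ∈ Set.Icc 0 L, ∀ b ∈ Set.Icc 0 L, dist (c a) (c b) = |a - b|

/-- `σ` is an asymptotic ray of `γ`: a pointwise limit of minimal geodesic segments
from points `c n 0` to `γ (t n)` with `t n → ∞`. -/
def IsAsymptoticRay {M : Type*} [MetricSpace M] (γ σ : ℝ → M) : Prop :=
  IsRay σ ∧ ∃ (t : ℕ → ℝ) (c : ℕ → ℝ → M),
    Filter.Tendsto t Filter.atTop Filter.atTop ∧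
    (∀ n, IsMinSeg (c n) (dist (c n 0) (γ (t n)))) ∧
    (∀ n, c n (dist (c n 0) (γ (t n))) = γ (t n)) ∧
    (∀ s ≥ (0:ℝ), Filter.Tendsto (fun n => c n s) Filter.atTop (nhds (σ s)))


/-- Along any asymptotic ray `σ` of a ray `γ`, the Busemann function `F_γ` satisfies
`F_γ (σ t) = t + F_γ (σ 0)` for all `t ≥ 0`. -/
theorem busemann_along_asymptotic_ray {M : Type*} [MetricSpace M] [CompleteSpace M]
    (γ : ℝ → M) (hγ : IsRay γ) (F : M → ℝ)
    (hF : ∀ x : M, Filter.Tendsto (fun t : ℝ => t - dist x (γ t)) Filter.atTop (nhds (F x)))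
    (σ : ℝ → M) (hσ : IsAsymptoticRay γ σ) :
    ∀ t ≥ (0:ℝ), F (σ t) = t + F (σ 0) := by
  obtain ⟨hσray, tn, c, htn, hmin, hend, hconv⟩ := hσ
  intro t ht
  set L : ℕ → ℝ := fun n => dist (c n 0) (γ (tn n)) with hL
  -- L n → ∞
  have hLtop : Tendsto L atTop atTop := by
    have h1 : Tendsto (fun n => tn n - dist (c n 0) (γ 0)) atTop atTop := by
      have h2 : Tendsto (fun n => dist (c n 0) (γ 0)) atTop
          (nhds (dist (σ 0) (γ 0))) :=
        ((continuous_dist.comp ((Continuous.prodMk continuous_id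
          continuous_const).comp continuous_id)).tendsto _).comp (hconv 0 le_rfl)
      simpa [sub_eq_add_neg] using htn.atTop_add (h2.neg)
    apply tendsto_atTop_mono' _ _ h1
    filter_upwards [htn.eventually_ge_atTop 0] with n hn
    have : dist (γ 0) (γ (tn n)) = tn n := by
      have := hγ 0 Set.self_mem_Ici (tn n) (Set.mem_Ici.mpr hn)
      rwa [zero_sub, abs_neg, abs_of_nonneg hn] at this
    have htri : dist (γ 0) (γ (tn n)) ≤ dist (γ 0) (c n 0) + dist (c n 0) (γ (tn n)) :=
      dist_triangle _ _ _
    rw [this] at htri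
    simp only [L]
    rw [dist_comm (γ 0)] at htri
    linarith
  -- eventually L n ≥ t
  have hev : ∀ᶠ n in atTop, tn n - dist (c n t) (γ (tn n))
      = (tn n - L n) + t := by
    filter_upwards [hLtop.eventually_ge_atTop t] with n hn
    have hct : dist (c n t) (c n (L n)) = |t - L n| :=
      hmin n t (Set.mem_Icc.mpr ⟨ht, hn⟩) (L n) (Set.mem_Icc.mpr ⟨dist_nonneg, le_rfl⟩)
    rw [hend n] at hct
    rw [hct, abs_of_nonpos (by linarith)]
    ring
  -- a n := tn n - L n → F (σ 0)
  have hdist0 : Tendsto (fun n => dist (c n 0) (σ 0)) atTop (nhds 0) :=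
    tendsto_iff_dist_tendsto_zero.mp (hconv 0 le_rfl)
  have hdistt : Tendsto (fun n => dist (c n t) (σ t)) atTop (nhds 0) :=
    tendsto_iff_dist_tendsto_zero.mp (hconv t ht)
  have key : ∀ (s : ℝ), 0 ≤ s →
      Tendsto (fun n => dist (c n s) (σ s)) atTop (nhds 0) →
      Tendsto (fun n => tn n - dist (c n s) (γ (tn n))) atTop (nhds (F (σ s))) := by
    intro s hs hd
    have hbase : Tendsto (fun n => tn n - dist (σ s) (γ (tn n))) atTop
        (nhds (F (σ s))) := (hF (σ s)).comp htn
    have hzero : Tendsto (fun n => dist (c n s) (γ (tn n)) - dist (σ s) (γ (tn n)))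
        atTop (nhds 0) := by
      apply squeeze_zero_norm _ hd
      intro n
      simpa [Real.norm_eq_abs] using abs_dist_sub_le (c n s) (σ s) (γ (tn n))
    have := hbase.sub hzero
    simpa using this.congr (fun n => by ring)
  have ha : Tendsto (fun n => tn n - L n) atTop (nhds (F (σ 0))) := key 0 le_rfl hdist0
  have hb : Tendsto (fun n => tn n - dist (c n t) (γ (tn n))) atTop (nhds (F (σ t))) :=
    key t ht hdistt
  have hb' : Tendsto (fun n => tn n - dist (c n t) (γ (tn n))) atTop
      (nhds (F (σ 0) + t)) := by
    refine Tendsto.congr' ?_ (ha.add_const t)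
    filter_upwards [hev] with n hn using hn.symm
  have := tendsto_nhds_unique hb hb'
  linarith
end

section
/- Define f(t) = e^{−t²} tanh t and G(t) = −f″(t)/f(t) for t > 0. Then G(t) = 8t/sinh(2t) + 2/cosh²(t) − 4t² + 2, and G is strictly monotone decreasing on (0, ∞). -/
open Set Filter Real

private lemma hasDerivAt_tanh' (x : ℝ) :
    HasDerivAt Real.tanh (1 / Real.cosh x ^ 2) x := by
  have h : HasDerivAt (fun y : ℝ => Real.sinh y / Real.cosh y)
      ((Real.cosh x * Real.cosh x - Real.sinh x * Real.sinh x) / Real.cosh x ^ 2) x :=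
    (Real.hasDerivAt_sinh x).div (Real.hasDerivAt_cosh x) (Real.cosh_pos x).ne'
  have heq : (fun y : ℝ => Real.sinh y / Real.cosh y) = Real.tanh := by
    funext y; rw [Real.tanh_eq_sinh_div_cosh]
  rw [heq] at h
  have h1 : Real.cosh x * Real.cosh x - Real.sinh x * Real.sinh x = 1 := by
    linear_combination Real.cosh_sq_sub_sinh_sq x
  rw [h1] at h
  exact h

private lemma hasDerivAt_negsq_exp (x : ℝ) :
    HasDerivAt (fun s : ℝ => Real.exp (-s ^ 2)) (-2 * x * Real.exp (-x ^ 2)) x := by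
  have h1 : HasDerivAt (fun s : ℝ => -s ^ 2) (-(2 * x)) x := by
    convert ((hasDerivAt_pow 2 x).neg) using 1 <;> (try rfl); simp
  have := h1.exp
  convert this using 1
  ring

/-- first derivative of f -/
private noncomputable def A (t : ℝ) : ℝ :=
  Real.exp (-t ^ 2) / Real.cosh t ^ 2 - 2 * t * Real.exp (-t ^ 2) * Real.tanh t

private lemma hasDerivAt_f (x : ℝ) :
    HasDerivAt (fun s : ℝ => Real.exp (-s ^ 2) * Real.tanh s) (A x) x := by
  have h := (hasDerivAt_negsq_exp x).mul (hasDerivAt_tanh' x)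
  convert h using 1 <;> (try rfl)
  unfold A
  field_simp
  ring

/-- second derivative of f -/
private noncomputable def B (t : ℝ) : ℝ :=
  Real.exp (-t ^ 2) * (-4 * t / Real.cosh t ^ 2 - 2 * Real.sinh t / Real.cosh t ^ 3
    - 2 * Real.sinh t / Real.cosh t + 4 * t ^ 2 * Real.sinh t / Real.cosh t)

private lemma hasDerivAt_A (x : ℝ) : HasDerivAt A (B x) x := by
  have hc : (Real.cosh x ^ 2) ≠ 0 := by positivity
  have h1 : HasDerivAt (fun t : ℝ => Real.exp (-t ^ 2) / Real.cosh t ^ 2)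
      ((-2 * x * Real.exp (-x ^ 2) * Real.cosh x ^ 2 -
        Real.exp (-x ^ 2) * (2 * Real.cosh x * Real.sinh x)) / (Real.cosh x ^ 2) ^ 2) x := by
    have hden : HasDerivAt (fun t : ℝ => Real.cosh t ^ 2)
        (2 * Real.cosh x * Real.sinh x) x := by
      have := (Real.hasDerivAt_cosh x).pow 2
      convert this using 1 <;> (try rfl); ring
    exact (hasDerivAt_negsq_exp x).div hden hc
  have h2 : HasDerivAt (fun t : ℝ => 2 * t * Real.exp (-t ^ 2) * Real.tanh t)
      ((2 * Real.exp (-x ^ 2) + 2 * x * (-2 * x * Real.exp (-x ^ 2))) * Real.tanh x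
        + 2 * x * Real.exp (-x ^ 2) * (1 / Real.cosh x ^ 2)) x := by
    have ha : HasDerivAt (fun t : ℝ => 2 * t * Real.exp (-t ^ 2))
        (2 * Real.exp (-x ^ 2) + 2 * x * (-2 * x * Real.exp (-x ^ 2))) x := by
      have := ((hasDerivAt_id x).const_mul 2).mul (hasDerivAt_negsq_exp x)
      convert this using 1 <;> (try rfl); simp only [id_eq]; ring
    exact ha.mul (hasDerivAt_tanh' x)
  have h := h1.sub h2
  have heq : A = fun t : ℝ => Real.exp (-t ^ 2) / Real.cosh t ^ 2 -
      2 * t * Real.exp (-t ^ 2) * Real.tanh t := by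
    funext t; rfl
  rw [heq]
  convert h using 1 <;> (try rfl)
  unfold B
  rw [Real.tanh_eq_sinh_div_cosh]
  field_simp
  ring

private lemma deriv_deriv_f (t : ℝ) :
    deriv (deriv (fun s : ℝ => Real.exp (-s ^ 2) * Real.tanh s)) t = B t := by
  have h1 : deriv (fun s : ℝ => Real.exp (-s ^ 2) * Real.tanh s) = A :=
    funext fun x => (hasDerivAt_f x).deriv
  rw [h1]
  exact (hasDerivAt_A t).deriv

private lemma formula (t : ℝ) (ht : 0 < t) :
    -(deriv (deriv (fun s : ℝ => Real.exp (-s^2) * Real.tanh s)) t) /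
        (Real.exp (-t^2) * Real.tanh t) =
      8 * t / Real.sinh (2 * t) + 2 / (Real.cosh t)^2 - 4 * t^2 + 2 := by
  rw [deriv_deriv_f]
  unfold B
  rw [Real.tanh_eq_sinh_div_cosh, Real.sinh_two_mul]
  have hs : Real.sinh t ≠ 0 := by
    have := Real.sinh_pos_iff.mpr ht; linarith
  have hc : Real.cosh t ≠ 0 := (Real.cosh_pos t).ne'
  have hE : Real.exp (-t ^ 2) ≠ 0 := Real.exp_ne_zero _
  field_simp
  ring

/-- sinh x < x * cosh x for x > 0 -/
private lemma sinh_lt_mul_cosh {x : ℝ} (hx : 0 < x) : Real.sinh x < x * Real.cosh x := by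
  have key : StrictMonoOn (fun y : ℝ => y * Real.cosh y - Real.sinh y) (Set.Ici 0) := by
    apply strictMonoOn_of_deriv_pos (convex_Ici 0)
    · apply Continuous.continuousOn
      exact ((continuous_id.mul Real.continuous_cosh).sub Real.continuous_sinh)
    · intro y hy
      rw [interior_Ici] at hy
      have hd : HasDerivAt (fun y : ℝ => y * Real.cosh y - Real.sinh y)
          (y * Real.sinh y) y := by
        have := ((hasDerivAt_id y).mul (Real.hasDerivAt_cosh y)).sub (Real.hasDerivAt_sinh y)
        convert this using 1 <;> (try rfl); simp only [id_eq]; ring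
      rw [hd.deriv]
      exact mul_pos hy (Real.sinh_pos_iff.mpr hy)
  have h0 := key (Set.self_mem_Ici) (Set.mem_Ici.mpr hx.le) hx
  simp only [Real.cosh_zero, Real.sinh_zero] at h0
  linarith

/-- derivative of the RHS g -/
private noncomputable def g (t : ℝ) : ℝ :=
  8 * t / Real.sinh (2 * t) + 2 / Real.cosh t ^ 2 - 4 * t ^ 2 + 2

private lemma hasDerivAt_g {x : ℝ} (hx : 0 < x) :
    HasDerivAt g ((8 * Real.sinh (2 * x) - 16 * x * Real.cosh (2 * x)) / Real.sinh (2 * x) ^ 2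
      - 4 * Real.sinh x / Real.cosh x ^ 3 - 8 * x) x := by
  have hs2 : Real.sinh (2 * x) ≠ 0 := by
    have := Real.sinh_pos_iff.mpr (by linarith : (0:ℝ) < 2 * x); linarith
  have hc : Real.cosh x ≠ 0 := (Real.cosh_pos x).ne'
  have h1 : HasDerivAt (fun t : ℝ => 8 * t / Real.sinh (2 * t))
      ((8 * Real.sinh (2 * x) - 8 * x * (2 * Real.cosh (2 * x))) / Real.sinh (2 * x) ^ 2) x := by
    have hn : HasDerivAt (fun t : ℝ => 8 * t) 8 x := by
      simpa using (hasDerivAt_id x).const_mul 8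
    have hd : HasDerivAt (fun t : ℝ => Real.sinh (2 * t)) (2 * Real.cosh (2 * x)) x := by
      have h2x : HasDerivAt (fun t : ℝ => 2 * t) 2 x := by
        simpa using (hasDerivAt_id x).const_mul 2
      have := (Real.hasDerivAt_sinh (2 * x)).comp x h2x
      convert this using 1 <;> (try rfl); ring
    exact hn.div hd hs2
  have h2 : HasDerivAt (fun t : ℝ => 2 / Real.cosh t ^ 2)
      (-4 * Real.sinh x / Real.cosh x ^ 3) x := by
    have hden : HasDerivAt (fun t : ℝ => Real.cosh t ^ 2)
        (2 * Real.cosh x * Real.sinh x) x := by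
      have := (Real.hasDerivAt_cosh x).pow 2
      convert this using 1 <;> (try rfl); ring
    have := (hasDerivAt_const x (2:ℝ)).div hden (by positivity)
    convert this using 1 <;> (try rfl)
    field_simp
    ring
  have h3 : HasDerivAt (fun t : ℝ => 4 * t ^ 2) (8 * x) x := by
    have := (hasDerivAt_pow 2 x).const_mul 4
    convert this using 1 <;> (try rfl); ring
  have h := ((h1.add h2).sub h3).add_const 2
  have heq : g = fun t : ℝ =>
      (8 * t / Real.sinh (2 * t) + 2 / Real.cosh t ^ 2 - 4 * t ^ 2) + 2 := by
    funext t; unfold g; ring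
  rw [heq]
  convert h using 1 <;> (try rfl)
  ring

private lemma g_strictAnti : StrictAntiOn g (Set.Ioi 0) := by
  apply strictAntiOn_of_deriv_neg (convex_Ioi 0)
  · intro x hx
    exact (hasDerivAt_g (Set.mem_Ioi.mp hx)).continuousAt.continuousWithinAt
  · intro x hx
    rw [interior_Ioi, Set.mem_Ioi] at hx
    rw [(hasDerivAt_g hx).deriv]
    have hx2 : (0:ℝ) < 2 * x := by linarith
    have hs2 : 0 < Real.sinh (2 * x) := Real.sinh_pos_iff.mpr hx2
    have hkey : Real.sinh (2 * x) < 2 * x * Real.cosh (2 * x) := sinh_lt_mul_cosh hx2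
    have ht1 : (8 * Real.sinh (2 * x) - 16 * x * Real.cosh (2 * x)) / Real.sinh (2 * x) ^ 2 < 0 := by
      apply div_neg_of_neg_of_pos
      · linarith
      · positivity
    have ht2 : 0 < 4 * Real.sinh x / Real.cosh x ^ 3 := by
      have := Real.sinh_pos_iff.mpr hx
      have := Real.cosh_pos x
      positivity
    linarith
  
/-- For `f t = e^{-t²} tanh t`, the radial curvature `G t = -f''(t)/f(t)` equals
`8t/sinh 2t + 2/cosh² t - 4t² + 2`, and `G` is strictly decreasing on `(0,∞)`. -/
theorem sinclair_curvature_formula_and_strictAnti :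
    (∀ t : ℝ, 0 < t →
      -(deriv (deriv (fun s : ℝ => Real.exp (-s^2) * Real.tanh s)) t) /
          (Real.exp (-t^2) * Real.tanh t) =
        8 * t / Real.sinh (2 * t) + 2 / (Real.cosh t)^2 - 4 * t^2 + 2) ∧
    StrictAntiOn (fun t : ℝ =>
      -(deriv (deriv (fun s : ℝ => Real.exp (-s^2) * Real.tanh s)) t) /
        (Real.exp (-t^2) * Real.tanh t)) (Set.Ioi 0) := by
  constructor
  · exact formula
  · intro x hx y hy hxy
    simp only
    rw [formula x (Set.mem_Ioi.mp hx), formula y (Set.mem_Ioi.mp hy)]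
    exact g_strictAnti hx hy hxy
end
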